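/- Let j be a 1-periodic, odd, bounded, piecewise continuous function on ℝ, let f_0 be continuous on [1/2,1], and let f_n = T^n f_0, where (Tf)(x) = f(1/(2−x))/(2−x)² − f(1/(1+x))/(1+x)². Then for every n ≥ 0: ∫_{1/2}^{1} j(2^n ?(x)) f_0(x) dx = ∫_{1/2}^{1} j(?(x)) f_n(x) dx, where ? is the Minkowski question mark function. -/

import Mathlib

/-- The mediant of two rationals, formed from numerators and denominators
of the reduced fractions. -/
def mediant (a b : ℚ) : ℚ := ((a.num + b.num : ℤ) : ℚ) / ((a.den + b.den : ℕ) : ℚ)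

/-- `sb n j` is the `j`-th element `ξ_{j,n}` of the Stern–Brocot sequence `F_n`:
`F_0 = {0/1, 1/1}` and `F_{n+1}` is obtained from `F_n` by inserting the mediant
between every pair of consecutive elements. -/
def sb : ℕ → ℕ → ℚ
  | 0, j => if j = 0 then 0 else 1
  | n + 1, j => if j % 2 = 0 then sb n (j / 2) else mediant (sb n (j / 2)) (sb n (j / 2 + 1))

open scoped Classical in
/-- The Minkowski question mark function, defined (as in the paper) as the limit
distribution function of the Stern–Brocot sequences:
`?(x) = lim_n |F_n ∩ [0,x]| / 2^n = sup { j/2^n : ξ_{j,n} ≤ x }`. -/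
noncomputable def questionMark (x : ℝ) : ℝ :=
  sSup {y : ℝ | ∃ n j : ℕ, j ≤ 2 ^ n ∧ ((sb n j : ℝ) ≤ x) ∧ y = (j : ℝ) / 2 ^ n}

/-- The operator `T` on functions on `[1/2,1]`:
`(Tf)(x) = f(1/(2−x))/(2−x)² − f(1/(1+x))/(1+x)²`.
(For `x ∈ [1/2,1]` both `1/(2−x)` and `1/(1+x)` lie in `[1/2,1]`.) -/
noncomputable def T (f : ℝ → ℝ) : ℝ → ℝ := fun x =>
  f (1 / (2 - x)) / (2 - x) ^ 2 - f (1 / (1 + x)) / (1 + x) ^ 2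

namespace QMAux

def Nn : ℕ → ℕ → ℤ
  | 0, j => if j = 0 then 0 else 1
  | n+1, j => if j % 2 = 0 then Nn n (j/2) else Nn n (j/2) + Nn n (j/2+1)

def Dn : ℕ → ℕ → ℤ
  | 0, _ => 1
  | n+1, j => if j % 2 = 0 then Dn n (j/2) else Dn n (j/2) + Dn n (j/2+1)

lemma Nn_even (n i : ℕ) : Nn (n+1) (2*i) = Nn n i := by
  have h1 : (2*i) % 2 = 0 := by omega
  have h2 : (2*i)/2 = i := by omega
  simp [Nn, h1, h2]

lemma Nn_odd (n i : ℕ) : Nn (n+1) (2*i+1) = Nn n i + Nn n (i+1) := by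
  have h1 : (2*i+1) % 2 = 1 := by omega
  have h2 : (2*i+1)/2 = i := by omega
  simp [Nn, h1, h2]

lemma Dn_even (n i : ℕ) : Dn (n+1) (2*i) = Dn n i := by
  have h1 : (2*i) % 2 = 0 := by omega
  have h2 : (2*i)/2 = i := by omega
  simp [Dn, h1, h2]

lemma Dn_odd (n i : ℕ) : Dn (n+1) (2*i+1) = Dn n i + Dn n (i+1) := by
  have h1 : (2*i+1) % 2 = 1 := by omega
  have h2 : (2*i+1)/2 = i := by omega
  simp [Dn, h1, h2]

lemma sb_even (n i : ℕ) : sb (n+1) (2*i) = sb n i := by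
  have h1 : (2*i) % 2 = 0 := by omega
  have h2 : (2*i)/2 = i := by omega
  simp [sb, h1, h2]

lemma sb_odd (n i : ℕ) : sb (n+1) (2*i+1) = mediant (sb n i) (sb n (i+1)) := by
  have h1 : (2*i+1) % 2 = 1 := by omega
  have h2 : (2*i+1)/2 = i := by omega
  simp [sb, h1, h2]

lemma ND_bounds : ∀ n j, 0 ≤ Nn n j ∧ Nn n j ≤ Dn n j ∧ 0 < Dn n j := by
  intro n
  induction n with
  | zero => intro j; by_cases h : j = 0 <;> simp [Nn, Dn, h]
  | succ n IH =>
    intro j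
    rcases Nat.even_or_odd j with ⟨i, hi⟩ | ⟨i, hi⟩
    · obtain rfl : j = 2*i := by omega
      rw [Nn_even, Dn_even]; exact IH i
    · obtain rfl : j = 2*i+1 := by omega
      rw [Nn_odd, Dn_odd]
      have h1 := IH i; have h2 := IH (i+1)
      refine ⟨by omega, by omega, by omega⟩

lemma num_den_div {x y : ℤ} (hy : 0 < y) (h : IsCoprime x y) :
    ((x:ℚ)/(y:ℚ)).num = x ∧ (((x:ℚ)/(y:ℚ)).den : ℤ) = y := by
  have hc : Nat.Coprime x.natAbs y.natAbs := Int.isCoprime_iff_gcd_eq_one.mp h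
  exact ⟨Rat.num_div_eq_of_coprime hy hc, Rat.den_div_eq_of_coprime hy hc⟩

lemma sb_invariant : ∀ n,
    (∀ j ≤ 2^n, (sb n j).num = Nn n j ∧ ((sb n j).den : ℤ) = Dn n j) ∧
    (∀ j < 2^n, Dn n j * Nn n (j+1) - Nn n j * Dn n (j+1) = 1) := by
  intro n
  induction n with
  | zero =>
    refine ⟨fun j hj => ?_, fun j hj => ?_⟩
    · interval_cases j <;> simp [sb, Nn, Dn]
    · interval_cases j; simp [Nn, Dn]
  | succ n IH =>
    obtain ⟨IH1, IH2⟩ := IH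
    have hmed : ∀ i < 2^n, (mediant (sb n i) (sb n (i+1))).num = Nn n i + Nn n (i+1) ∧
        ((mediant (sb n i) (sb n (i+1))).den : ℤ) = Dn n i + Dn n (i+1) := by
      intro i hi
      obtain ⟨hN1, hD1⟩ := IH1 i hi.le
      obtain ⟨hN2, hD2⟩ := IH1 (i+1) hi
      have hu := IH2 i hi
      have hb1 := ND_bounds n i; have hb2 := ND_bounds n (i+1)
      have hy : (0:ℤ) < Dn n i + Dn n (i+1) := by omega
      have hco : IsCoprime (Nn n i + Nn n (i+1)) (Dn n i + Dn n (i+1)) :=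
        ⟨Dn n i, -(Nn n i), by linear_combination hu⟩
      have hrw : mediant (sb n i) (sb n (i+1)) =
          ((Nn n i + Nn n (i+1) : ℤ) : ℚ) / ((Dn n i + Dn n (i+1) : ℤ) : ℚ) := by
        unfold mediant
        rw [hN1, hN2]
        congr 1
        push_cast [← hD1, ← hD2]
        ring
      rw [hrw]; exact num_den_div hy hco
    have hp : 2^(n+1) = 2*2^n := by ring
    constructor
    · intro j hj
      rcases Nat.even_or_odd j with ⟨i, hi⟩ | ⟨i, hi⟩
      · obtain rfl : j = 2*i := by omega
        have hi' : i ≤ 2^n := by omega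
        rw [sb_even, Nn_even, Dn_even]; exact IH1 i hi'
      · obtain rfl : j = 2*i+1 := by omega
        have hi' : i < 2^n := by omega
        rw [sb_odd, Nn_odd, Dn_odd]; exact hmed i hi'
    · intro j hj
      rcases Nat.even_or_odd j with ⟨i, hi⟩ | ⟨i, hi⟩
      · obtain rfl : j = 2*i := by omega
        have hi' : i < 2^n := by omega
        rw [show 2*i+1 = 2*i+1 from rfl, Nn_even, Dn_even, Nn_odd, Dn_odd]
        linear_combination IH2 i hi'
      · obtain rfl : j = 2*i+1 := by omega
        have hi' : i < 2^n := by omega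
        rw [show 2*i+1+1 = 2*(i+1) by ring, Nn_odd, Dn_odd, Nn_even, Dn_even]
        linear_combination IH2 i hi'

end QMAux
namespace QMAux

lemma Dn_pos (n j : ℕ) : (0:ℤ) < Dn n j := (ND_bounds n j).2.2
lemma Nn_nonneg (n j : ℕ) : (0:ℤ) ≤ Nn n j := (ND_bounds n j).1
lemma Nn_le_Dn (n j : ℕ) : Nn n j ≤ Dn n j := (ND_bounds n j).2.1

lemma sb_eq {n j : ℕ} (hj : j ≤ 2^n) : (sb n j : ℚ) = (Nn n j : ℚ) / (Dn n j : ℚ) := by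
  obtain ⟨h1, h2⟩ := (sb_invariant n).1 j hj
  conv_lhs => rw [← Rat.num_div_den (sb n j)]
  rw [h1]
  congr 1
  exact_mod_cast congrArg (fun z : ℤ => (z : ℚ)) h2

lemma sb_nonneg {n j : ℕ} (hj : j ≤ 2^n) : (0:ℚ) ≤ sb n j := by
  rw [sb_eq hj]
  exact div_nonneg (by exact_mod_cast Nn_nonneg n j) (by exact_mod_cast (Dn_pos n j).le)

lemma sb_le_one {n j : ℕ} (hj : j ≤ 2^n) : sb n j ≤ 1 := by
  rw [sb_eq hj, div_le_one (by exact_mod_cast Dn_pos n j)]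
  exact_mod_cast Nn_le_Dn n j

lemma sb_adj {n j : ℕ} (hj : j < 2^n) : sb n j < sb n (j+1) := by
  rw [sb_eq hj.le, sb_eq hj]
  rw [div_lt_div_iff₀ (by exact_mod_cast Dn_pos n j) (by exact_mod_cast Dn_pos n (j+1))]
  have hu := (sb_invariant n).2 j hj
  exact_mod_cast (by linarith : Nn n j * Dn n (j+1) < Nn n (j+1) * Dn n j)

lemma sb_lt_sb {n i j : ℕ} (hij : i < j) (hj : j ≤ 2^n) : sb n i < sb n j := by
  induction j with
  | zero => omega
  | succ j IHj =>
    rcases Nat.lt_succ_iff_lt_or_eq.mp hij with hc | hc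
    · exact lt_trans (IHj hc (by omega)) (sb_adj (by omega))
    · subst hc; exact sb_adj (by omega)

lemma sb_mono {n i j : ℕ} (hij : i ≤ j) (hj : j ≤ 2^n) : sb n i ≤ sb n j := by
  rcases eq_or_lt_of_le hij with rfl | h
  · exact le_refl _
  · exact (sb_lt_sb h hj).le

lemma sb_zero (n : ℕ) : sb n 0 = 0 := by
  induction n with
  | zero => simp [sb]
  | succ n IH => simpa [IH] using sb_even n 0

lemma sb_top (n : ℕ) : sb n (2^n) = 1 := by
  induction n with
  | zero => simp [sb]
  | succ n IH => rw [show 2^(n+1) = 2*2^n by ring, sb_even, IH]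

lemma sb_lift (m : ℕ) : ∀ n j, sb (n+m) (2^m * j) = sb n j := by
  induction m with
  | zero => intro n j; simp
  | succ m IH =>
    intro n j
    rw [show 2^(m+1)*j = 2*(2^m*j) by ring, show n+(m+1) = (n+m)+1 by ring, sb_even, IH]

lemma Nn_lift : ∀ n, ∀ j ≤ 2^n, Nn (n+1) j = Nn n j ∧ Dn (n+1) j = Nn n j + Dn n j := by
  intro n
  induction n with
  | zero =>
    intro j hj; interval_cases j <;> simp [Nn, Dn]
  | succ n IH =>
    intro j hj
    have hp : 2^(n+1) = 2*2^n := by ring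
    rcases Nat.even_or_odd j with ⟨i, hi⟩ | ⟨i, hi⟩
    · obtain rfl : j = 2*i := by omega
      have hi' : i ≤ 2^n := by omega
      rw [Nn_even, Dn_even, Nn_even, Dn_even]
      exact IH i hi'
    · obtain rfl : j = 2*i+1 := by omega
      have hi' : i < 2^n := by omega
      obtain ⟨hN1, hD1⟩ := IH i hi'.le
      obtain ⟨hN2, hD2⟩ := IH (i+1) hi'
      rw [Nn_odd, Dn_odd, Nn_odd, Dn_odd, hN1, hN2, hD1, hD2]
      constructor <;> ring

lemma sb_half {n j : ℕ} (hj : j ≤ 2^n) : sb (n+1) j = sb n j / (1 + sb n j) := by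
  have hj' : j ≤ 2^(n+1) := le_trans hj (Nat.pow_le_pow_right (by norm_num) (Nat.le_succ n))
  obtain ⟨hN, hD⟩ := Nn_lift n j hj
  rw [sb_eq hj', sb_eq hj, hN, hD]
  have ha : (0:ℚ) ≤ (Nn n j : ℚ) := by exact_mod_cast Nn_nonneg n j
  have hb : (0:ℚ) < (Dn n j : ℚ) := by exact_mod_cast Dn_pos n j
  have hab : (0:ℚ) < (Nn n j : ℚ) + (Dn n j : ℚ) := by linarith
  rw [show ((Nn n j + Dn n j : ℤ) : ℚ) = (Nn n j : ℚ) + (Dn n j : ℚ) by push_cast; ring]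
  field_simp
  ring

lemma ND_symm : ∀ n, ∀ j ≤ 2^n, Nn n (2^n - j) = Dn n j - Nn n j ∧ Dn n (2^n - j) = Dn n j := by
  intro n
  induction n with
  | zero => intro j hj; interval_cases j <;> simp [Nn, Dn]
  | succ n IH =>
    intro j hj
    have hp : 2^(n+1) = 2*2^n := by ring
    rcases Nat.even_or_odd j with ⟨i, hi⟩ | ⟨i, hi⟩
    · obtain rfl : j = 2*i := by omega
      have hi' : i ≤ 2^n := by omega
      have hidx : 2^(n+1) - 2*i = 2*(2^n - i) := by omega
      rw [hidx, Nn_even, Dn_even, Nn_even, Dn_even]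
      exact IH i hi'
    · obtain rfl : j = 2*i+1 := by omega
      have hi' : i < 2^n := by omega
      have hidx : 2^(n+1) - (2*i+1) = 2*(2^n - (i+1)) + 1 := by omega
      have hidx2 : 2^n - (i+1) + 1 = 2^n - i := by omega
      obtain ⟨hN1, hD1⟩ := IH i hi'.le
      obtain ⟨hN2, hD2⟩ := IH (i+1) hi'
      rw [hidx, Nn_odd, Dn_odd, Nn_odd, Dn_odd, hidx2, hN1, hD1, hN2, hD2]
      constructor <;> ring

lemma sb_symm {n j : ℕ} (hj : j ≤ 2^n) : sb n (2^n - j) = 1 - sb n j := by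
  obtain ⟨hN, hD⟩ := ND_symm n j hj
  rw [sb_eq (by omega : 2^n - j ≤ 2^n), sb_eq hj, hN, hD]
  have hb : (0:ℚ) < (Dn n j : ℚ) := by exact_mod_cast Dn_pos n j
  rw [show ((Dn n j - Nn n j : ℤ) : ℚ) = (Dn n j : ℚ) - (Nn n j : ℚ) by push_cast; ring]
  field_simp

lemma sb_mid (n : ℕ) : sb (n+1) (2^n) = 1/2 := by
  rw [sb_half (le_refl _), sb_top]
  norm_num

end QMAux

namespace QMAux

def S (x : ℝ) : Set ℝ := {y : ℝ | ∃ n j : ℕ, j ≤ 2 ^ n ∧ ((sb n j : ℝ) ≤ x) ∧ y = (j : ℝ) / 2 ^ n}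

lemma qm_def (x : ℝ) : questionMark x = sSup (S x) := rfl

lemma S_bdd (x : ℝ) : BddAbove (S x) := by
  refine ⟨1, ?_⟩
  rintro y ⟨n, j, hj, -, rfl⟩
  rw [div_le_one (by positivity)]
  calc (j:ℝ) ≤ ((2^n : ℕ) : ℝ) := by exact_mod_cast hj
    _ = 2^n := by push_cast; ring

lemma q_ge {x : ℝ} {n j : ℕ} (hj : j ≤ 2^n) (h : (sb n j:ℝ) ≤ x) :
    (j:ℝ)/2^n ≤ questionMark x :=
  le_csSup (S_bdd x) ⟨n, j, hj, h, rfl⟩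

lemma q_le {x c : ℝ} (h0 : 0 ≤ c)
    (h : ∀ n j : ℕ, j ≤ 2^n → (sb n j:ℝ) ≤ x → (j:ℝ)/2^n ≤ c) : questionMark x ≤ c := by
  apply Real.sSup_le _ h0
  rintro y ⟨n, j, hj, hx, rfl⟩
  exact h n j hj hx

lemma q_nonneg {x : ℝ} (hx : 0 ≤ x) : 0 ≤ questionMark x := by
  have h := q_ge (x := x) (n := 0) (j := 0) (by norm_num) (by rw [sb_zero]; simpa)
  simpa using h

lemma q_le_one (x : ℝ) : questionMark x ≤ 1 :=
  q_le zero_le_one (fun n j hj _ => by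
    rw [div_le_one (by positivity)]
    calc (j:ℝ) ≤ ((2^n : ℕ) : ℝ) := by exact_mod_cast hj
      _ = 2^n := by push_cast; ring)

lemma q_mono : Monotone questionMark := by
  intro x y hxy
  by_cases hS : (S x).Nonempty
  · refine csSup_le_csSup (S_bdd y) hS ?_
    rintro z ⟨n, j, hj, hz, rfl⟩
    exact ⟨n, j, hj, le_trans hz hxy, rfl⟩
  · rw [qm_def, Set.not_nonempty_iff_eq_empty.mp hS, Real.sSup_empty, qm_def]
    exact Real.sSup_nonneg (by rintro z ⟨n, j, hj, -, rfl⟩; positivity)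

lemma qm_sum_le {x : ℝ} (hx : x ∈ Set.Icc (0:ℝ) 1) :
    questionMark x + questionMark (1-x) ≤ 1 := by
  have key : ∀ n j m i : ℕ, j ≤ 2^n → i ≤ 2^m → (sb n j:ℝ) ≤ x → (sb m i:ℝ) ≤ 1-x →
      (j:ℝ)/2^n + (i:ℝ)/2^m ≤ 1 := by
    intro n j m i hj hi hxj hxi
    have hl1 : (sb (n+m) (2^m * j) : ℝ) ≤ x := by rw [sb_lift m n j]; exact hxj
    have hl2 : (sb (n+m) (2^n * i) : ℝ) ≤ 1-x := by
      rw [show n+m = m+n by ring, sb_lift n m i]; exact hxi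
    have hpow : 2^(n+m) = 2^n * 2^m := by rw [pow_add]
    have hb1 : 2^m*j ≤ 2^m*2^n := Nat.mul_le_mul_left _ hj
    have hb2 : 2^n*i ≤ 2^n*2^m := Nat.mul_le_mul_left _ hi
    have hcomm : (2:ℕ)^n*2^m = 2^m*2^n := Nat.mul_comm _ _
    have hsum : 2^m*j + 2^n*i ≤ 2^(n+m) := by
      by_contra hcon
      push_neg at hcon
      have hlt : sb (n+m) (2^(n+m) - 2^m*j) < sb (n+m) (2^n*i) :=
        sb_lt_sb (by omega) (by omega)
      have hsymm := sb_symm (n := n+m) (j := 2^m*j) (by omega)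
      rw [hsymm] at hlt
      have hcast : (1:ℝ) - (sb (n+m) (2^m*j) : ℝ) < (sb (n+m) (2^n*i) : ℝ) := by
        exact_mod_cast hlt
      linarith
    have heq : (j:ℝ)/2^n + (i:ℝ)/2^m = ((2^m*j + 2^n*i : ℕ):ℝ)/2^(n+m) := by
      push_cast [pow_add]
      field_simp
    rw [heq, div_le_one (by positivity)]
    calc ((2^m*j + 2^n*i : ℕ):ℝ) ≤ ((2^(n+m) : ℕ):ℝ) := by exact_mod_cast hsum
      _ = 2^(n+m) := by push_cast; ring
  have h2 : ∀ m i : ℕ, i ≤ 2^m → (sb m i:ℝ) ≤ 1-x → (i:ℝ)/2^m ≤ 1 - questionMark x := by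
    intro m i hi hxi
    have hile : (i:ℝ)/2^m ≤ 1 := by
      rw [div_le_one (by positivity)]
      calc (i:ℝ) ≤ ((2^m : ℕ) : ℝ) := by exact_mod_cast hi
        _ = 2^m := by push_cast; ring
    have h3 : questionMark x ≤ 1 - (i:ℝ)/2^m := by
      refine q_le (by linarith) (fun n j hj hxj => ?_)
      linarith [key n j m i hj hi hxj hxi]
    linarith
  have h4 : questionMark (1-x) ≤ 1 - questionMark x := by
    refine q_le (by linarith [q_le_one x]) h2
  linarith

lemma qm_sum_ge {x : ℝ} (hx : x ∈ Set.Icc (0:ℝ) 1) :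
    1 ≤ questionMark x + questionMark (1-x) := by
  classical
  have hstep : ∀ n : ℕ, 1 - (1/2:ℝ)^n ≤ questionMark x + questionMark (1-x) := by
    intro n
    set P : ℕ → Prop := fun j => (sb n j : ℝ) ≤ x with hPdef
    have hP0 : P 0 := by
      show (sb n 0 : ℝ) ≤ x
      rw [sb_zero]; simpa using hx.1
    set J := Nat.findGreatest P (2^n) with hJ
    have hJle : J ≤ 2^n := Nat.findGreatest_le _
    have hPJ : P J := Nat.findGreatest_spec (Nat.zero_le _) hP0
    have hq1 : (J:ℝ)/2^n ≤ questionMark x := q_ge hJle hPJ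
    have hpow : (0:ℝ) < 2^n := by positivity
    rcases eq_or_lt_of_le hJle with heq | hlt
    · have h1 : (1:ℝ) ≤ questionMark x := by
        have : (J:ℝ)/2^n = 1 := by
          rw [heq]; push_cast; field_simp
        linarith [hq1, this ▸ hq1]
      have h0 : 0 ≤ questionMark (1-x) := q_nonneg (by linarith [hx.2])
      have : (0:ℝ) < (1/2:ℝ)^n := by positivity
      linarith
    · have hnP : ¬ P (J+1) := Nat.findGreatest_is_greatest (Nat.lt_succ_self J) hlt
      have hxlt : x < (sb n (J+1) : ℝ) := not_le.mp hnP
      have hmem : (sb n (2^n - (J+1)) : ℝ) ≤ 1 - x := by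
        have hs := sb_symm (n:=n) (j:=J+1) hlt
        have : (sb n (2^n - (J+1)) : ℝ) = 1 - (sb n (J+1) : ℝ) := by
          exact_mod_cast congrArg (fun q : ℚ => (q:ℝ)) hs
        rw [this]; linarith
      have hq2 : ((2^n - (J+1) : ℕ):ℝ)/2^n ≤ questionMark (1-x) := q_ge (by omega) hmem
      have hcast : ((2^n - (J+1) : ℕ):ℝ) = 2^n - (J:ℝ) - 1 := by
        rw [Nat.cast_sub hlt]; push_cast; ring
      rw [hcast] at hq2
      have harith : (J:ℝ)/2^n + (2^n - (J:ℝ) - 1)/2^n = 1 - (1/2:ℝ)^n := by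
        field_simp
        have h2 : (1/2:ℝ)^n * 2^n = 1 := by rw [← mul_pow]; norm_num
        linarith
      linarith
  by_contra hcon
  push_neg at hcon
  obtain ⟨n, hn⟩ := exists_pow_lt_of_lt_one
    (show (0:ℝ) < 1 - (questionMark x + questionMark (1-x)) by linarith)
    (by norm_num : (1/2:ℝ) < 1)
  linarith [hstep n]

lemma qm_symm {x : ℝ} (hx : x ∈ Set.Icc (0:ℝ) 1) :
    questionMark (1-x) = 1 - questionMark x := by
  have h1 := qm_sum_le hx
  have h2 := qm_sum_ge hx
  linarith

end QMAux
namespace QMAux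

lemma qm_half {x : ℝ} (hx : x ∈ Set.Icc (0:ℝ) 1) :
    questionMark (x/(1+x)) = questionMark x / 2 := by
  obtain ⟨hx0, hx1⟩ := hx
  have h1x : (0:ℝ) < 1 + x := by linarith
  have hmx0 : 0 ≤ x/(1+x) := div_nonneg hx0 h1x.le
  have hmx2 : x/(1+x) ≤ 1/2 := by
    rw [div_le_div_iff₀ h1x (by norm_num)]
    linarith
  have hq0 : 0 ≤ questionMark x := q_nonneg hx0
  refine le_antisymm ?_ ?_
  · refine q_le (by linarith) ?_
    intro n j hj hle
    cases n with
    | zero =>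
      interval_cases j
      · simp; positivity
      · exfalso
        have : (sb 0 1 : ℝ) = 1 := by norm_num [sb]
        rw [this] at hle
        linarith
    | succ k =>
      by_cases hjk : j ≤ 2^k
      · have hhalf := sb_half (n:=k) (j:=j) hjk
        have hcast : (sb (k+1) j : ℝ) = (sb k j:ℝ)/(1+(sb k j:ℝ)) := by
          have := congrArg (fun q : ℚ => (q:ℝ)) hhalf
          push_cast at this
          exact this
        have ha : (0:ℝ) ≤ (sb k j : ℝ) := by exact_mod_cast sb_nonneg hjk
        have hxj : (sb k j : ℝ) ≤ x := by
          rw [hcast, div_le_div_iff₀ (by linarith) h1x] at hle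
          nlinarith
        have hq := q_ge hjk hxj
        have h2k : (0:ℝ) < 2^k := by positivity
        rw [pow_succ]
        rw [show (j:ℝ)/(2^k*2) = ((j:ℝ)/2^k)/2 by field_simp]
        linarith
      · exfalso
        push_neg at hjk
        have hlt := sb_lt_sb (n := k+1) (i := 2^k) hjk hj
        have hmid : (sb (k+1) (2^k) : ℝ) = 1/2 := by
          have := congrArg (fun q : ℚ => (q:ℝ)) (sb_mid k)
          push_cast at this
          exact this
        have : (1/2:ℝ) < (sb (k+1) j:ℝ) := by
          rw [← hmid]; exact_mod_cast hlt
        linarith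
  · have h : questionMark x ≤ 2 * questionMark (x/(1+x)) := by
      refine q_le (by linarith [q_nonneg hmx0]) ?_
      intro n j hj hle
      have ha : (0:ℝ) ≤ (sb n j : ℝ) := by exact_mod_cast sb_nonneg hj
      have hmem : (sb (n+1) j : ℝ) ≤ x/(1+x) := by
        have hhalf := sb_half (n:=n) (j:=j) hj
        have hcast : (sb (n+1) j : ℝ) = (sb n j:ℝ)/(1+(sb n j:ℝ)) := by
          have := congrArg (fun q : ℚ => (q:ℝ)) hhalf
          push_cast at this
          exact this
        rw [hcast, div_le_div_iff₀ (by linarith) h1x]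
        nlinarith
      have hq := q_ge (x := x/(1+x)) (n := n+1) (j := j)
        (le_trans hj (Nat.pow_le_pow_right (by norm_num) (Nat.le_succ n))) hmem
      have h2n : (0:ℝ) < 2^n := by positivity
      rw [pow_succ] at hq
      rw [show (j:ℝ)/2^n = 2*((j:ℝ)/(2^n*2)) by field_simp]
      linarith
    linarith

lemma qm_phi2 {u : ℝ} (hu : u ∈ Set.Icc (1/2:ℝ) 1) :
    questionMark (1/(1+u)) = 1 - questionMark u / 2 := by
  obtain ⟨h1, h2⟩ := hu
  have h1u : (0:ℝ) < 1 + u := by linarith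
  have hu01 : u ∈ Set.Icc (0:ℝ) 1 := ⟨by linarith, h2⟩
  have heq : (1:ℝ)/(1+u) = 1 - u/(1+u) := by field_simp; ring
  have hmem : u/(1+u) ∈ Set.Icc (0:ℝ) 1 := by
    constructor
    · positivity
    · rw [div_le_one h1u]; linarith
  rw [heq, qm_symm hmem, qm_half hu01]

lemma qm_phi1 {u : ℝ} (hu : u ∈ Set.Icc (1/2:ℝ) 1) :
    questionMark (1/(2-u)) = (1 + questionMark u) / 2 := by
  obtain ⟨h1, h2⟩ := hu
  have h2u : (0:ℝ) < 2 - u := by linarith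
  have hw01 : (1-u) ∈ Set.Icc (0:ℝ) 1 := ⟨by linarith, by linarith⟩
  have hu01 : u ∈ Set.Icc (0:ℝ) 1 := ⟨by linarith, h2⟩
  have heq : (1:ℝ)/(2-u) = 1 - (1-u)/(1+(1-u)) := by
    rw [show (1:ℝ)+(1-u) = 2-u by ring]
    field_simp
    norm_num
  have hmem : (1-u)/(1+(1-u)) ∈ Set.Icc (0:ℝ) 1 := by
    rw [show (1:ℝ)+(1-u) = 2-u by ring]
    constructor
    · exact div_nonneg (by linarith) h2u.le
    · rw [div_le_one h2u]; linarith
  rw [heq, qm_symm hmem, qm_half hw01, qm_symm hu01]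
  ring

end QMAux

namespace QMAux

open Set MeasureTheory

lemma q_measurable : Measurable questionMark := q_mono.measurable

lemma j_measurable {j : ℝ → ℝ} (S : Finset ℝ)
    (hpc : ∀ x : ℝ, (∀ s ∈ S, ∀ k : ℤ, x ≠ s + k) → ContinuousAt j x) :
    Measurable j := by
  set D : Set ℝ := ⋃ s ∈ (S : Set ℝ), ⋃ k : ℤ, {(s + k : ℝ)} with hD
  have hDc : D.Countable := by
    refine Set.Countable.biUnion (S.countable_toSet) (fun s _ => ?_)
    exact Set.countable_iUnion (fun k => Set.countable_singleton _)
  have hcont : ContinuousOn j Dᶜ := by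
    intro x hx
    refine (hpc x ?_).continuousWithinAt
    intro s hs k
    intro hEq
    apply hx
    exact Set.mem_biUnion hs (Set.mem_iUnion.mpr ⟨k, by simp [hEq]⟩)
  apply measurable_of_isOpen
  intro U hU
  obtain ⟨V, hV, hVU⟩ := continuousOn_iff'.mp hcont U hU
  have hsplit : j ⁻¹' U = (j ⁻¹' U ∩ D) ∪ (V ∩ Dᶜ) := by
    ext z
    constructor
    · intro hz
      by_cases hzD : z ∈ D
      · exact Or.inl ⟨hz, hzD⟩
      · refine Or.inr ?_
        have : z ∈ j ⁻¹' U ∩ Dᶜ := ⟨hz, hzD⟩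
        rw [hVU] at this
        exact this
    · rintro (⟨hz, -⟩ | hz)
      · exact hz
      · rw [← hVU] at hz
        exact hz.1
  rw [hsplit]
  exact ((hDc.mono (Set.inter_subset_right)).measurableSet).union
    (hV.measurableSet.inter (hDc.measurableSet.compl))

/-- bounded measurable times continuous-on-Icc is interval integrable -/
lemma integ_mul {u v : ℝ → ℝ} (hu : Measurable u) {C : ℝ} (hC : ∀ x, |u x| ≤ C)
    {a b : ℝ} (hab : a ≤ b) (hv : ContinuousOn v (Icc a b)) :
    IntervalIntegrable (fun x => u x * v x) volume a b := by
  obtain ⟨M, hM⟩ := IsCompact.exists_bound_of_continuousOn isCompact_Icc hv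
  rw [intervalIntegrable_iff_integrableOn_Icc_of_le hab]
  have hC0 : 0 ≤ C := le_trans (abs_nonneg _) (hC a)
  refine Integrable.mono' (g := fun _ => C * M) ?_ ?_ ?_
  · exact (integrableOn_const_iff).mpr (Or.inr measure_Icc_lt_top)
  · exact ((hu.aestronglyMeasurable).restrict).mul (hv.aestronglyMeasurable measurableSet_Icc)
  · rw [ae_restrict_iff' measurableSet_Icc]
    filter_upwards with x hx
    have h1 : ‖u x * v x‖ = |u x| * ‖v x‖ := by
      rw [norm_mul]; rfl
    rw [h1]
    exact mul_le_mul (hC x) (hM x hx) (norm_nonneg _) hC0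

end QMAux
namespace QMAux

open Set MeasureTheory

lemma phi1_image : (fun u : ℝ => 1/(2-u)) '' Icc (1/2 : ℝ) 1 = Icc (2/3 : ℝ) 1 := by
  apply Set.eq_of_subset_of_subset
  · rintro y ⟨x, ⟨hx1, hx2⟩, rfl⟩
    have h2x : (0:ℝ) < 2 - x := by linarith
    constructor
    · rw [div_le_div_iff₀ (by norm_num) h2x]; linarith
    · rw [div_le_one h2x]; linarith
  · rintro y ⟨hy1, hy2⟩
    have hy0 : (0:ℝ) < y := by linarith
    refine ⟨2 - 1/y, ⟨?_, ?_⟩, ?_⟩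
    · have : 1/y ≤ 3/2 := by rw [div_le_div_iff₀ hy0 (by norm_num)]; linarith
      linarith
    · have : 1 ≤ 1/y := by rw [le_div_iff₀ hy0]; linarith
      linarith
    · simp only
      rw [show 2 - (2 - 1/y) = 1/y by ring, one_div_one_div]

lemma phi2_image : (fun u : ℝ => 1/(1+u)) '' Icc (1/2 : ℝ) 1 = Icc (1/2 : ℝ) (2/3) := by
  apply Set.eq_of_subset_of_subset
  · rintro y ⟨x, ⟨hx1, hx2⟩, rfl⟩
    have h1x : (0:ℝ) < 1 + x := by linarith
    constructor
    · rw [div_le_div_iff₀ (by norm_num) h1x]; linarith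
    · rw [div_le_div_iff₀ h1x (by norm_num)]; linarith
  · rintro y ⟨hy1, hy2⟩
    have hy0 : (0:ℝ) < y := by linarith
    refine ⟨1/y - 1, ⟨?_, ?_⟩, ?_⟩
    · have : 3/2 ≤ 1/y := by rw [div_le_div_iff₀ (by norm_num) hy0]; linarith
      linarith
    · have : 1/y ≤ 2 := by rw [div_le_iff₀ hy0]; linarith
      linarith
    · simp only
      rw [show 1 + (1/y - 1) = 1/y by ring, one_div_one_div]

lemma phi1_inj : Set.InjOn (fun u : ℝ => 1/(2-u)) (Icc (1/2:ℝ) 1) := by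
  intro a ha b hb hab
  simp only at hab
  have h2a : (0:ℝ) < 2 - a := by linarith [ha.2]
  have h2b : (0:ℝ) < 2 - b := by linarith [hb.2]
  rw [div_eq_div_iff h2a.ne' h2b.ne'] at hab
  linarith

lemma phi2_inj : Set.InjOn (fun u : ℝ => 1/(1+u)) (Icc (1/2:ℝ) 1) := by
  intro a ha b hb hab
  simp only at hab
  have h1a : (0:ℝ) < 1 + a := by linarith [ha.1]
  have h1b : (0:ℝ) < 1 + b := by linarith [hb.1]
  rw [div_eq_div_iff h1a.ne' h1b.ne'] at hab
  linarith

lemma phi1_hasDeriv {x : ℝ} (hx : x ∈ Icc (1/2:ℝ) 1) :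
    HasDerivWithinAt (fun u : ℝ => 1/(2-u)) (1/(2-x)^2) (Icc (1/2:ℝ) 1) x := by
  have h2x : (2:ℝ) - x ≠ 0 := ne_of_gt (by linarith [hx.2])
  have h := ((hasDerivWithinAt_id x (Icc (1/2:ℝ) 1)).const_sub 2).inv h2x
  have heq : (fun u : ℝ => 1/(2-u)) = (fun y : ℝ => (2 - id y)⁻¹) := by
    funext u; simp [one_div]
  rw [heq]
  rw [show (1:ℝ)/(2-x)^2 = - -1 / (2 - id x)^2 by simp [id]]
  exact h

lemma phi2_hasDeriv {x : ℝ} (hx : x ∈ Icc (1/2:ℝ) 1) :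
    HasDerivWithinAt (fun u : ℝ => 1/(1+u)) (-(1/(1+x)^2)) (Icc (1/2:ℝ) 1) x := by
  have h1x : (1:ℝ) + x ≠ 0 := ne_of_gt (by linarith [hx.1])
  have h := ((hasDerivWithinAt_id x (Icc (1/2:ℝ) 1)).const_add 1).inv h1x
  have heq : (fun u : ℝ => 1/(1+u)) = (fun y : ℝ => (1 + id y)⁻¹) := by
    funext u; simp [one_div]
  rw [heq]
  rw [show -(1/(1+x)^2) = -1 / (1 + id x)^2 by simp [id, neg_div]]
  exact h

lemma cov1 (F : ℝ → ℝ) :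
    ∫ x in Icc (2/3:ℝ) 1, F x
      = ∫ u in Icc (1/2:ℝ) 1, |1/(2-u)^2| • F (1/(2-u)) := by
  rw [← phi1_image]
  exact MeasureTheory.integral_image_eq_integral_abs_deriv_smul measurableSet_Icc
    (fun x hx => phi1_hasDeriv hx) phi1_inj F

lemma cov2 (F : ℝ → ℝ) :
    ∫ x in Icc (1/2:ℝ) (2/3), F x
      = ∫ u in Icc (1/2:ℝ) 1, |(-(1/(1+u)^2))| • F (1/(1+u)) := by
  rw [← phi2_image]
  exact MeasureTheory.integral_image_eq_integral_abs_deriv_smul measurableSet_Icc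
    (fun x hx => phi2_hasDeriv hx) phi2_inj F

end QMAux
namespace QMAux

open Set MeasureTheory

lemma phi1_mapsTo : Set.MapsTo (fun u : ℝ => 1/(2-u)) (Icc (1/2:ℝ) 1) (Icc (1/2:ℝ) 1) := by
  intro x hx
  have h : (1:ℝ)/(2-x) ∈ Icc (2/3:ℝ) 1 := phi1_image ▸ Set.mem_image_of_mem _ hx
  exact ⟨by linarith [h.1], h.2⟩

lemma phi2_mapsTo : Set.MapsTo (fun u : ℝ => 1/(1+u)) (Icc (1/2:ℝ) 1) (Icc (1/2:ℝ) 1) := by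
  intro x hx
  have h : (1:ℝ)/(1+x) ∈ Icc (1/2:ℝ) (2/3) := phi2_image ▸ Set.mem_image_of_mem _ hx
  exact ⟨h.1, by linarith [h.2]⟩

lemma phi1_contOn : ContinuousOn (fun u : ℝ => 1/(2-u)) (Icc (1/2:ℝ) 1) := by
  refine ContinuousOn.div continuousOn_const ((continuous_const.sub continuous_id).continuousOn) ?_
  intro x hx
  exact ne_of_gt (by linarith [hx.2])

lemma phi2_contOn : ContinuousOn (fun u : ℝ => 1/(1+u)) (Icc (1/2:ℝ) 1) := by
  refine ContinuousOn.div continuousOn_const ((continuous_const.add continuous_id).continuousOn) ?_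
  intro x hx
  exact ne_of_gt (by linarith [hx.1])

lemma T_contOn {g : ℝ → ℝ} (hg : ContinuousOn g (Icc (1/2:ℝ) 1)) :
    ContinuousOn (T g) (Icc (1/2:ℝ) 1) := by
  unfold T
  refine ContinuousOn.sub ?_ ?_
  · refine ContinuousOn.div (hg.comp phi1_contOn phi1_mapsTo) ?_ ?_
    · exact ((continuous_const.sub continuous_id).pow 2).continuousOn
    · intro x hx
      have : (0:ℝ) < 2 - x := by linarith [hx.2]
      positivity
  · refine ContinuousOn.div (hg.comp phi2_contOn phi2_mapsTo) ?_ ?_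
    · exact ((continuous_const.add continuous_id).pow 2).continuousOn
    · intro x hx
      have : (0:ℝ) < 1 + x := by linarith [hx.1]
      positivity

lemma step (h : ℝ → ℝ) (hm : Measurable h) {C : ℝ} (hC : ∀ x, |h x| ≤ C)
    (hodd : ∀ x, h (-x) = -h x) (hper : ∀ x, h (x+1) = h x)
    (g : ℝ → ℝ) (hg : ContinuousOn g (Icc (1/2:ℝ) 1)) :
    ∫ x in (1/2:ℝ)..1, h (2 * questionMark x) * g x
      = ∫ x in (1/2:ℝ)..1, h (questionMark x) * T g x := by
  set q := questionMark with hq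
  set F : ℝ → ℝ := fun x => h (2 * q x) * g x with hF
  set A : ℝ → ℝ := fun u => |1/(2-u)^2| • F (1/(2-u)) with hA
  set B : ℝ → ℝ := fun u => |(-(1/(1+u)^2))| • F (1/(1+u)) with hB
  have hqm : Measurable fun x => h (2 * q x) := hm.comp (measurable_const.mul q_measurable)
  have hqb : ∀ x, |h (2 * q x)| ≤ C := fun x => hC _
  -- integrability of F on subintervals of [1/2,1]
  have hFint : ∀ a b : ℝ, 1/2 ≤ a → a ≤ b → b ≤ 1 → IntervalIntegrable F volume a b := by
    intro a b ha hab hb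
    exact integ_mul hqm hqb hab (hg.mono (fun y hy => ⟨le_trans ha hy.1, le_trans hy.2 hb⟩))
  -- pointwise identity
  have hpoint : ∀ u ∈ Icc (1/2:ℝ) 1, h (q u) * T g u = A u + B u := by
    intro u hu
    have h2u : (0:ℝ) < 2 - u := by linarith [hu.2]
    have h1u : (0:ℝ) < 1 + u := by linarith [hu.1]
    have e1 : q (1/(2-u)) = (1 + q u)/2 := qm_phi1 hu
    have e2 : q (1/(1+u)) = 1 - q u/2 := qm_phi2 hu
    have habs1 : |1/(2-u)^2| = 1/(2-u)^2 := abs_of_pos (by positivity)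
    have habs2 : |(-(1/(1+u)^2))| = 1/(1+u)^2 := by
      rw [abs_neg]; exact abs_of_pos (by positivity)
    have hh1 : h (2 * q (1/(2-u))) = h (q u) := by
      rw [e1, show 2*((1 + q u)/2) = q u + 1 by ring, hper]
    have hh2 : h (2 * q (1/(1+u))) = -(h (q u)) := by
      rw [e2, show 2*(1 - q u/2) = (-(q u)+1)+1 by ring, hper, hper, hodd]
    simp only [hA, hB, hF, smul_eq_mul, habs1, habs2, hh1, hh2, T]
    ring
  -- interval-integral versions of the two change-of-variables
  have hAeq : ∫ u in (1/2:ℝ)..1, A u = ∫ x in (2/3:ℝ)..1, F x := by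
    rw [intervalIntegral.integral_of_le (by norm_num : (1/2:ℝ) ≤ 1),
      ← MeasureTheory.integral_Icc_eq_integral_Ioc]
    rw [intervalIntegral.integral_of_le (by norm_num : (2/3:ℝ) ≤ 1),
      ← MeasureTheory.integral_Icc_eq_integral_Ioc]
    exact (cov1 F).symm
  have hBeq : ∫ u in (1/2:ℝ)..1, B u = ∫ x in (1/2:ℝ)..(2/3), F x := by
    rw [intervalIntegral.integral_of_le (by norm_num : (1/2:ℝ) ≤ 1),
      ← MeasureTheory.integral_Icc_eq_integral_Ioc]
    rw [intervalIntegral.integral_of_le (by norm_num : (1/2:ℝ) ≤ 2/3),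
      ← MeasureTheory.integral_Icc_eq_integral_Ioc]
    exact (cov2 F).symm
  -- integrability of A and B
  have hAint : IntervalIntegrable A volume (1/2:ℝ) 1 := by
    have hA' : A = fun u => h (2 * q (1/(2-u))) * (|1/(2-u)^2| * g (1/(2-u))) := by
      funext u
      simp only [hA, hF, smul_eq_mul]
      ring
    rw [hA']
    refine integ_mul (hm.comp (measurable_const.mul (q_measurable.comp ?_))) (fun x => hC _)
      (by norm_num) ?_
    · have : Measurable fun u : ℝ => (2-u)⁻¹ := (measurable_const.sub measurable_id).inv
      simpa [one_div] using this
    · refine ContinuousOn.mul ?_ (hg.comp phi1_contOn phi1_mapsTo)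
      refine ContinuousOn.abs ?_
      refine ContinuousOn.div continuousOn_const
        (((continuous_const.sub continuous_id).pow 2).continuousOn) ?_
      intro x hx
      have : (0:ℝ) < 2 - x := by linarith [hx.2]
      positivity
  have hBint : IntervalIntegrable B volume (1/2:ℝ) 1 := by
    have hB' : B = fun u => h (2 * q (1/(1+u))) * (|(-(1/(1+u)^2))| * g (1/(1+u))) := by
      funext u
      simp only [hB, hF, smul_eq_mul]
      ring
    rw [hB']
    refine integ_mul (hm.comp (measurable_const.mul (q_measurable.comp ?_))) (fun x => hC _)
      (by norm_num) ?_
    · have : Measurable fun u : ℝ => (1+u)⁻¹ := (measurable_const.add measurable_id).inv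
      simpa [one_div] using this
    · refine ContinuousOn.mul ?_ (hg.comp phi2_contOn phi2_mapsTo)
      refine ContinuousOn.abs ?_
      refine ContinuousOn.neg ?_
      refine ContinuousOn.div continuousOn_const
        (((continuous_const.add continuous_id).pow 2).continuousOn) ?_
      intro x hx
      have : (0:ℝ) < 1 + x := by linarith [hx.1]
      positivity
  -- assemble
  have hsplit : ∫ x in (1/2:ℝ)..1, F x
      = (∫ x in (1/2:ℝ)..(2/3), F x) + ∫ x in (2/3:ℝ)..1, F x :=
    (intervalIntegral.integral_add_adjacent_intervals
      (hFint _ _ le_rfl (by norm_num) (by norm_num))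
      (hFint _ _ (by norm_num) (by norm_num) le_rfl)).symm
  have hrhs : ∫ x in (1/2:ℝ)..1, h (q x) * T g x
      = (∫ u in (1/2:ℝ)..1, A u) + ∫ u in (1/2:ℝ)..1, B u := by
    rw [← intervalIntegral.integral_add hAint hBint]
    refine intervalIntegral.integral_congr ?_
    intro x hx
    rw [Set.uIcc_of_le (by norm_num : (1/2:ℝ) ≤ 1)] at hx
    exact hpoint x hx
  rw [hrhs, hAeq, hBeq]
  rw [show (∫ x in (1/2:ℝ)..1, h (2 * questionMark x) * g x) = ∫ x in (1/2:ℝ)..1, F x from rfl]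
  rw [hsplit]
  ring

end QMAux
namespace QMAux

open Set MeasureTheory

lemma Tn_contOn {g : ℝ → ℝ} (hg : ContinuousOn g (Icc (1/2:ℝ) 1)) (n : ℕ) :
    ContinuousOn (T^[n] g) (Icc (1/2:ℝ) 1) := by
  induction n with
  | zero => simpa using hg
  | succ n IH => rw [Function.iterate_succ_apply']; exact T_contOn IH

lemma key (n : ℕ) : ∀ h : ℝ → ℝ, Measurable h → ∀ C : ℝ, (∀ x, |h x| ≤ C) →
    (∀ x, h (-x) = -h x) → (∀ x, h (x+1) = h x) →
    ∀ g : ℝ → ℝ, ContinuousOn g (Icc (1/2:ℝ) 1) →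
    ∫ x in (1/2:ℝ)..1, h (2^n * questionMark x) * g x
      = ∫ x in (1/2:ℝ)..1, h (questionMark x) * (T^[n] g) x := by
  induction n with
  | zero =>
    intro h _ C _ _ _ g _
    simp
  | succ n IH =>
    intro h hm C hC hodd hper g hg
    set h' : ℝ → ℝ := fun x => h (2*x) with hh'
    have hm' : Measurable h' := hm.comp (measurable_const.mul measurable_id)
    have hC' : ∀ x, |h' x| ≤ C := fun x => hC _
    have hodd' : ∀ x, h' (-x) = -h' x := by
      intro x
      simp only [hh']
      rw [show 2*(-x) = -(2*x) by ring, hodd]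
    have hper' : ∀ x, h' (x+1) = h' x := by
      intro x
      simp only [hh']
      rw [show 2*(x+1) = (2*x+1)+1 by ring, hper, hper]
    have e1 : ∫ x in (1/2:ℝ)..1, h (2^(n+1) * questionMark x) * g x
        = ∫ x in (1/2:ℝ)..1, h' (2^n * questionMark x) * g x := by
      refine intervalIntegral.integral_congr (fun x _ => ?_)
      simp only [hh']
      congr 1
      congr 1
      ring
    have e2 := IH h' hm' C hC' hodd' hper' g hg
    have e3 : ∫ x in (1/2:ℝ)..1, h' (questionMark x) * (T^[n] g) x
        = ∫ x in (1/2:ℝ)..1, h (questionMark x) * (T^[n+1] g) x := by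
      rw [show (∫ x in (1/2:ℝ)..1, h' (questionMark x) * (T^[n] g) x)
          = ∫ x in (1/2:ℝ)..1, h (2 * questionMark x) * (T^[n] g) x from rfl]
      rw [step h hm hC hodd hper (T^[n] g) (Tn_contOn hg n)]
      refine intervalIntegral.integral_congr (fun x _ => ?_)
      rw [Function.iterate_succ_apply']
    rw [e1, e2, e3]

end QMAux

/-- Lemma 1: if `j` is a 1-periodic, odd, bounded, piecewise continuous function
and `f₀` is continuous on `[1/2,1]`, then for every `n ≥ 0`,
`∫_{1/2}^1 j(2^n ?(x)) f₀(x) dx = ∫_{1/2}^1 j(?(x)) f_n(x) dx`,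
where `f_n = T^n f₀` and `?` is the Minkowski question mark function. -/
theorem integral_j_questionMark (j : ℝ → ℝ)
    (hper : ∀ x, j (x + 1) = j x)
    (hodd : ∀ x, j (-x) = -j x)
    (hbd : ∃ C, ∀ x, |j x| ≤ C)
    (hpc : ∃ S : Finset ℝ, ∀ x : ℝ, (∀ s ∈ S, ∀ k : ℤ, x ≠ s + k) → ContinuousAt j x)
    (f₀ : ℝ → ℝ) (hf₀ : ContinuousOn f₀ (Set.Icc (1 / 2 : ℝ) 1)) (n : ℕ) :
    ∫ x in (1 / 2 : ℝ)..1, j (2 ^ n * questionMark x) * f₀ x =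
      ∫ x in (1 / 2 : ℝ)..1, j (questionMark x) * (T^[n] f₀) x := by
  obtain ⟨C, hC⟩ := hbd
  obtain ⟨S, hS⟩ := hpc
  exact QMAux.key n j (QMAux.j_measurable S hS) C hC hodd hper f₀ hf₀
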